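/- If E is not a parent of Y and j ∈ {1, …, d} satisfies j ∉ PA_Y ∩ (CH_E ∪ PA(AN_Y ∩ CH_E)), then there exists an invariant set S with j ∉ S. -/

import Mathlib

/-- Nodes of the graph: the environment node `E`, predictor nodes `V j` for
`j ∈ {1, …, d}` (represented by `Fin d`), and the response node `Y`. -/
inductive Node (d : ℕ) : Type where
  | E : Node d
  | V : Fin d → Node d
  | Y : Node d
deriving DecidableEq

/-- A directed acyclic graph on `{E} ∪ {1, …, d} ∪ {Y}` in which `E` has no
parents (`E` is exogenous). -/
structure CGraph (d : ℕ) where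
  adj : Node d → Node d → Prop
  acyclic : ∀ v, ¬ Relation.TransGen adj v v
  exogenous : ∀ v, ¬ adj v Node.E

namespace CGraph

variable {d : ℕ} (G : CGraph d)

/-- Undirected adjacency: an edge between `u` and `v` in either direction. -/
def Edge (u v : Node d) : Prop := G.adj u v ∨ G.adj v u

/-- `p` is a path between `a` and `b`: a duplicate-free list of nodes starting
at `a`, ending at `b`, with consecutive nodes adjacent (in either direction). -/
def IsPath (p : List (Node d)) (a b : Node d) : Prop :=
  p.head? = some a ∧ p.getLast? = some b ∧ p.Nodup ∧ p.Chain' G.Edge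

/-- `x` is a (strict) descendant of `v`. -/
def Desc (v x : Node d) : Prop := Relation.TransGen G.adj v x

/-- The consecutive triple `u, m, w` on a path blocks the path given `C`:
either `m` is a non-collider lying in `C`, or `m` is a collider such that
neither `m` nor any of its descendants lies in `C`. -/
def BlockedAt (C : Set (Node d)) (u m w : Node d) : Prop :=
  (¬ (G.adj u m ∧ G.adj w m) ∧ m ∈ C) ∨
  ((G.adj u m ∧ G.adj w m) ∧ m ∉ C ∧ ∀ x, G.Desc m x → x ∉ C)

/-- A path `p` is blocked by `C` if some consecutive triple on it blocks it. -/
def Blocked (C : Set (Node d)) (p : List (Node d)) : Prop :=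
  ∃ q u m w r, p = q ++ u :: m :: w :: r ∧ G.BlockedAt C u m w

/-- `a` and `b` are d-separated given `C`: every path between them is blocked. -/
def DSep (a b : Node d) (C : Set (Node d)) : Prop :=
  ∀ p, G.IsPath p a b → G.Blocked C p

/-- `S ⊆ {1, …, d}` is invariant if `E` and `Y` are d-separated given `S`. -/
def Invariant (S : Set (Fin d)) : Prop := G.DSep Node.E Node.Y (Node.V '' S)

/-- `S` is minimally invariant if it is invariant and no strict subset of `S`
is invariant. -/
def MinInvariant (S : Set (Fin d)) : Prop :=
  G.Invariant S ∧ ∀ S', S' ⊂ S → ¬ G.Invariant S'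

/-- `S_AS`: the union of all minimally invariant sets. -/
def SAS : Set (Fin d) := ⋃₀ {S | G.MinInvariant S}

/-- `S_ICP`: the intersection of all invariant sets (`∅` if there are none). -/
def SICP : Set (Fin d) :=
  {j | (∃ S, G.Invariant S) ∧ ∀ S, G.Invariant S → j ∈ S}

/-- `S_AS^m`: the union of all minimally invariant sets of cardinality `≤ m`. -/
def SASm (m : ℕ) : Set (Fin d) := ⋃₀ {S | G.MinInvariant S ∧ S.ncard ≤ m}

/-- The parents of `Y` among `{1, …, d}`. -/
def paY : Set (Fin d) := {j | G.adj (Node.V j) Node.Y}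

/-- The children of `E` among `{1, …, d}`. -/
def chE : Set (Fin d) := {j | G.adj Node.E (Node.V j)}

/-- The ancestors of `Y` among `{1, …, d}`. -/
def anY : Set (Fin d) := {j | Relation.TransGen G.adj (Node.V j) Node.Y}

/-- `PA(A)`: the union of the parent sets of the elements of `A ⊆ {1, …, d}`. -/
def paOf (A : Set (Fin d)) : Set (Fin d) := {j | ∃ i ∈ A, G.adj (Node.V j) (Node.V i)}

end CGraph

private lemma getElem_idx {α : Type*} (l : List α) {i k : ℕ} (hik : i = k)
    (h : i < l.length) : l[i]'h = l[k]'(hik ▸ h) := by subst hik; rfl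

/-- if `E` is not a parent of `Y` and
`j ∉ PA_Y ∩ (CH_E ∪ PA(AN_Y ∩ CH_E))`, then there exists an invariant set `S`
with `j ∉ S`. -/
theorem exists_invariant_not_mem {d : ℕ} (G : CGraph d)
    (h : ¬ G.adj Node.E Node.Y) (j : Fin d)
    (hj : j ∉ G.paY ∩ (G.chE ∪ G.paOf (G.anY ∩ G.chE))) :
    ∃ S : Set (Fin d), G.Invariant S ∧ j ∉ S := by
  classical
  refine ⟨G.anY \ {j}, ?_, by simp⟩
  intro p hp
  by_contra hnb
  obtain ⟨hhead, hlastq, hnodup, hchain⟩ := hp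
  set C : Set (Node d) := Node.V '' (G.anY \ {j}) with hCdef
  -- basic index facts
  have hpne : p ≠ [] := by intro hh; rw [hh] at hhead; simp at hhead
  have hlen1 : 0 < p.length := List.length_pos_iff.mpr hpne
  have h0 : p[0]'hlen1 = Node.E := by
    rw [List.head?_eq_getElem?, List.getElem?_eq_getElem hlen1] at hhead
    exact Option.some_inj.mp hhead
  have hlast : p[p.length - 1]'(by omega) = Node.Y := by
    rw [List.getLast?_eq_getElem?, List.getElem?_eq_getElem (by omega)] at hlastq
    exact Option.some_inj.mp hlastq
  have hadj : ∀ i (h : i + 1 < p.length),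
      G.Edge (p[i]'(by omega)) (p[i+1]'h) := by
    intro i h
    have := List.isChain_iff_getElem.mp hchain i (by omega)
    simpa [List.get_eq_getElem] using this
  have hne : ∀ i k (hi : i < p.length) (hk : k < p.length), i ≠ k →
      (p[i]'hi) ≠ (p[k]'hk) := by
    intro i k hi hk hik he
    exact hik (hnodup.getElem_inj_iff.mp he)
  have hnb3 : ∀ i (h : i + 2 < p.length),
      ¬ G.BlockedAt C (p[i]'(by omega)) (p[i+1]'(by omega)) (p[i+2]'h) := by
    intro i h hb
    apply hnb
    refine ⟨p.take i, p[i]'(by omega), p[i+1]'(by omega), p[i+2]'h, p.drop (i+3), ?_, hb⟩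
    have d0 := List.drop_eq_getElem_cons (l := p) (i := i) (by omega)
    have d1 := List.drop_eq_getElem_cons (l := p) (i := i+1) (by omega)
    have d2 := List.drop_eq_getElem_cons (l := p) (i := i+1+1) (by omega)
    rw [d1, d2] at d0
    conv_lhs => rw [← List.take_append_drop i p, d0]
  have notColMem : ∀ i (h : i + 2 < p.length), (p[i+1]'(by omega)) ∈ C →
      G.adj (p[i]'(by omega)) (p[i+1]'(by omega)) ∧ G.adj (p[i+2]'h) (p[i+1]'(by omega)) := by
    intro i h hm
    by_contra hcol
    exact hnb3 i h (Or.inl ⟨hcol, hm⟩)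
  have colAct : ∀ i (h : i + 2 < p.length),
      G.adj (p[i]'(by omega)) (p[i+1]'(by omega)) → G.adj (p[i+2]'h) (p[i+1]'(by omega)) →
      (p[i+1]'(by omega)) ∈ C ∨ ∃ x, G.Desc (p[i+1]'(by omega)) x ∧ x ∈ C := by
    intro i h h1 h2
    by_contra hx
    push_neg at hx
    exact hnb3 i h (Or.inr ⟨⟨h1, h2⟩, hx.1, fun x hd => hx.2 x hd⟩)
  have hCan : ∀ v, v ∈ C → Relation.TransGen G.adj v Node.Y := by
    rintro v ⟨t, ht, rfl⟩
    exact ht.1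
  have hanOf : ∀ i (h : i + 2 < p.length),
      G.adj (p[i]'(by omega)) (p[i+1]'(by omega)) → G.adj (p[i+2]'h) (p[i+1]'(by omega)) →
      Relation.TransGen G.adj (p[i+1]'(by omega)) Node.Y := by
    intro i h h1 h2
    rcases colAct i h h1 h2 with hm | ⟨x, hd, hx⟩
    · exact hCan _ hm
    · exact Relation.TransGen.trans hd (hCan _ hx)
  have hacy2 : ∀ u v : Node d, G.adj u v → G.adj v u → False := fun u v h1 h2 =>
    G.acyclic u (Relation.TransGen.head h1 (Relation.TransGen.single h2))
  -- length ≥ 3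
  have hlen3 : 3 ≤ p.length := by
    by_contra hl
    have : p.length = 1 ∨ p.length = 2 := by omega
    rcases this with h1 | h2
    · have : p[0]'hlen1 = Node.Y := by
        have := hlast
        rwa [getElem_idx p (show p.length - 1 = 0 by omega)] at this
      rw [h0] at this
      cases this
    · have he := hadj 0 (by omega)
      have hY1 : p[0+1]'(by omega) = Node.Y := by
        have := hlast
        rwa [getElem_idx p (show p.length - 1 = 0 + 1 by omega)] at this
      rw [h0, hY1] at he
      rcases he with h1 | h1
      · exact h h1
      · exact G.exogenous _ h1
  obtain ⟨m, hm⟩ : ∃ m, p.length = m + 3 := ⟨p.length - 3, by omega⟩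
  have hY : p[m+2]'(by omega) = Node.Y := by
    have := hlast
    rwa [getElem_idx p (show p.length - 1 = m + 2 by omega)] at this
  -- leftward induction: if the edge at (i+1, i+2) points left, then p[i+1] is an ancestor of Y
  have L' : ∀ i (h : i + 2 < p.length), G.adj (p[i+2]'h) (p[i+1]'(by omega)) →
      Relation.TransGen G.adj (p[i+1]'(by omega)) Node.Y := by
    intro i
    induction i with
    | zero =>
      intro h h21
      have he := hadj 0 (by omega)
      rw [h0] at he
      have hE1 : G.adj Node.E (p[0+1]'(by omega)) := by
        rcases he with h1 | h1
        · exact h1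
        · exact absurd h1 (G.exogenous _)
      have h01 : G.adj (p[0]'(by omega)) (p[0+1]'(by omega)) := by rw [h0]; exact hE1
      exact hanOf 0 h h01 h21
    | succ i ih =>
      intro h h21
      have he := hadj (i+1) (by omega)
      rcases he with h1 | h1
      · exact hanOf (i+1) h h1 h21
      · exact Relation.TransGen.head h1 (ih (by omega) h1)
  -- the last edge points into Y
  have hlastadj : G.adj (p[m+1]'(by omega)) Node.Y := by
    have he := hadj (m+1) (by omega)
    have hY' : p[m+1+1]'(by omega) = Node.Y := hY
    rw [hY'] at he
    rcases he with h1 | h1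
    · exact h1
    · exfalso
      have hAN := L' m (by omega) (by
        have : G.adj (p[m+2]'(by omega)) (p[m+1]'(by omega)) := by rw [hY]; exact h1
        exact this)
      exact G.acyclic Node.Y (Relation.TransGen.head h1 hAN)
  -- the last inner node is V j, and j ∈ paY
  have hnc : ¬ (G.adj (p[m]'(by omega)) (p[m+1]'(by omega)) ∧
      G.adj (p[m+2]'(by omega)) (p[m+1]'(by omega))) := by
    rintro ⟨-, h2⟩
    rw [hY] at h2
    exact G.acyclic Node.Y (Relation.TransGen.head h2 (Relation.TransGen.single hlastadj))
  have hnotC : (p[m+1]'(by omega)) ∉ C := fun hc => hnc (notColMem m (by omega) hc)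
  obtain ⟨hVj, hjpaY⟩ : (p[m+1]'(by omega)) = Node.V j ∧ G.adj (Node.V j) Node.Y := by
    cases h' : (p[m+1]'(by omega)) with
    | E =>
      rw [h'] at hlastadj
      exact absurd hlastadj h
    | Y =>
      rw [h'] at hlastadj
      exact absurd (Relation.TransGen.single hlastadj) (G.acyclic Node.Y)
    | V t =>
      rw [h'] at hlastadj hnotC
      have ht : t = j := by
        by_contra hne'
        exact hnotC ⟨t, ⟨Relation.TransGen.single hlastadj, by simp [hne']⟩, rfl⟩
      rw [ht] at hlastadj
      exact ⟨by rw [ht], hlastadj⟩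
  have hj' := hj
  simp only [Set.mem_inter_iff, Set.mem_union, not_and, not_or] at hj'
  have hjpa : j ∈ G.paY := hjpaY
  obtain ⟨hjch, hjpaOf⟩ := hj' hjpa
  -- case analysis on m
  rcases m with _ | m'
  · -- m = 0 : path is [E, V j, Y]
    have hVj0 : p[0+1]'(by omega) = Node.V j := hVj
    have he := hadj 0 (by omega)
    rw [h0, hVj0] at he
    rcases he with h1 | h1
    · exact hjch h1
    · exact G.exogenous _ h1
  · -- m = m' + 1 : the node p[m'+1] is a collider that is an ancestor of Y
    have hVj' : p[m'+2]'(by omega) = Node.V j := hVj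
    have hY3 : p[m'+3]'(by omega) = Node.Y := hY
    have hcol : G.adj (p[m']'(by omega)) (p[m'+1]'(by omega)) ∧
        G.adj (p[m'+2]'(by omega)) (p[m'+1]'(by omega)) := by
      by_contra hncol
      have hnotC2 : (p[m'+1]'(by omega)) ∉ C := fun hc => hncol (notColMem m' (by omega) hc)
      have hAN : Relation.TransGen G.adj (p[m'+1]'(by omega)) Node.Y := by
        have he := hadj (m'+1) (by omega)
        rcases he with h1 | h1
        · have h1' : G.adj (p[m'+1]'(by omega)) (p[m'+2]'(by omega)) := h1
          rw [hVj'] at h1'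
          exact Relation.TransGen.head h1' (Relation.TransGen.single hjpaY)
        · have h1' : G.adj (p[m'+2]'(by omega)) (p[m'+1]'(by omega)) := h1
          exact L' m' (by omega) h1'
      cases h'' : (p[m'+1]'(by omega)) with
      | E =>
        exact hne (m'+1) 0 (by omega) (by omega) (by omega) (by rw [h'', h0])
      | Y =>
        exact hne (m'+1) (m'+3) (by omega) (by omega) (by omega) (by rw [h'', hY3])
      | V s =>
        rw [h''] at hAN hnotC2
        have hs : s = j := by
          by_contra hsj
          exact hnotC2 ⟨s, ⟨hAN, by simp [hsj]⟩, rfl⟩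
        exact hne (m'+1) (m'+2) (by omega) (by omega) (by omega) (by rw [h'', hs, hVj'])
    have hANm : Relation.TransGen G.adj (p[m'+1]'(by omega)) Node.Y :=
      hanOf m' (by omega) hcol.1 hcol.2
    rcases m' with _ | m''
    · -- m' = 0 : p[1] ∈ anY ∩ chE and j is its parent, contradiction
      have hc1 : G.adj (p[0]'(by omega)) (p[0+1]'(by omega)) := hcol.1
      rw [h0] at hc1
      have hc2 : G.adj (p[0+2]'(by omega)) (p[0+1]'(by omega)) := hcol.2
      have hVj0 : p[0+2]'(by omega) = Node.V j := hVj'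
      rw [hVj0] at hc2
      cases h'' : (p[0+1]'(by omega)) with
      | E =>
        exact hne (0+1) 0 (by omega) (by omega) (by omega) (by rw [h'', h0])
      | Y =>
        have hY0 : p[0+3]'(by omega) = Node.Y := hY3
        exact hne (0+1) (0+3) (by omega) (by omega) (by omega) (by rw [h'', hY0])
      | V s =>
        rw [h''] at hc1 hc2 hANm
        exact hjpaOf ⟨s, ⟨hANm, hc1⟩, hc2⟩
    · -- m' = m'' + 1 : p[m''+1] is forced to be a non-collider ancestor not in C, contradiction
      have hcol1 : G.adj (p[m''+1]'(by omega)) (p[m''+2]'(by omega)) := hcol.1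
      have hnotC3 : (p[m''+1]'(by omega)) ∉ C := by
        intro hcmem
        have hc := notColMem m'' (by omega) hcmem
        exact hacy2 _ _ hcol1 hc.2
      have hANm' : Relation.TransGen G.adj (p[m''+2]'(by omega)) Node.Y := hANm
      have hAN3 : Relation.TransGen G.adj (p[m''+1]'(by omega)) Node.Y :=
        Relation.TransGen.head hcol1 hANm'
      cases h''' : (p[m''+1]'(by omega)) with
      | E =>
        exact hne (m''+1) 0 (by omega) (by omega) (by omega) (by rw [h''', h0])
      | Y =>
        have hY4 : p[m''+4]'(by omega) = Node.Y := hY3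
        exact hne (m''+1) (m''+4) (by omega) (by omega) (by omega) (by rw [h''', hY4])
      | V s =>
        rw [h'''] at hAN3 hnotC3
        have hs : s = j := by
          by_contra hsj
          exact hnotC3 ⟨s, ⟨hAN3, by simp [hsj]⟩, rfl⟩
        have hVj3 : p[m''+3]'(by omega) = Node.V j := hVj'
        exact hne (m''+1) (m''+3) (by omega) (by omega) (by omega) (by rw [h''', hs, hVj3])
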